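/- Let B be a basis with fundamental functions φ (of B) and φ* (of the dual system B*). If B is a t-greedy set for x* ∈ Y (the closed span of B* in X*), then for every finite A ⊂ ℕ and every x ∈ X: |(x* − P_B x*)(P_A x)| ≤ t⁻¹ φ*(|A|) φ(|B|) |B|⁻¹ ‖x‖ ‖x*‖. -/

import Mathlib

open Finset

/-- If `B` is a `t`-greedy set for `x*` in the closed span of the dual
functionals, then for every finite `A` and every `x ∈ X`,
`|(x* − P_B x*)(P_A x)| ≤ t⁻¹ φ*(|A|) φ(|B|) |B|⁻¹ ‖x‖ ‖x*‖`, where `φ, φ*` are the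
fundamental functions (formalized as arbitrary upper-bound functions for the norms of
signed indicator sums). -/
theorem stmt9
    {X : Type*} [NormedAddCommGroup X] [NormedSpace ℝ X]
    (e : ℕ → X) (f : ℕ → X →L[ℝ] ℝ)
    (hbi : ∀ i j, f i (e j) = if i = j then (1 : ℝ) else 0)
    (α₁ α₂ : ℝ) (hα₁pos : 0 < α₁) (hα₂pos : 0 < α₂)
    (hα₁ : ∀ i, ‖e i‖ ≤ α₁) (hα₂ : ∀ i, ‖f i‖ ≤ α₂)
    (φ φs : ℕ → ℝ)
    (hφ : ∀ (m : ℕ) (S : Finset ℕ) (ε : ℕ → ℝ), S.card ≤ m → (∀ i ∈ S, |ε i| = 1) →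
      ‖∑ i ∈ S, ε i • e i‖ ≤ φ m)
    (hφs : ∀ (m : ℕ) (S : Finset ℕ) (ε : ℕ → ℝ), S.card ≤ m → (∀ i ∈ S, |ε i| = 1) →
      ‖∑ i ∈ S, ε i • f i‖ ≤ φs m)
    (t : ℝ) (ht0 : 0 < t) (ht1 : t ≤ 1)
    (g : X →L[ℝ] ℝ)
    (hg : g ∈ closure (↑(Submodule.span ℝ (Set.range f)) : Set (X →L[ℝ] ℝ)))
    (B : Finset ℕ) (hB : B.Nonempty)
    (hgreedy : ∀ i ∈ B, ∀ j ∉ B, t * |g (e j)| ≤ |g (e i)|) :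
    ∀ (A : Finset ℕ) (x : X),
      |(g - ∑ i ∈ B, g (e i) • f i) (∑ i ∈ A, f i x • e i)| ≤
        t⁻¹ * φs A.card * φ B.card * ((B.card : ℝ))⁻¹ * ‖x‖ * ‖g‖ := by
  intro A x
  have hcard : (0:ℝ) < B.card := by exact_mod_cast hB.card_pos
  have hφBnn : (0:ℝ) ≤ φ B.card := by
    have := hφ B.card ∅ (fun _ => 1) (by simp) (by simp)
    simpa using this
  have hφsAnn : (0:ℝ) ≤ φs A.card := by
    have := hφs A.card ∅ (fun _ => 1) (by simp) (by simp)
    simpa using this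
  -- sum of |g (e i)| over B is bounded by φ |B| * ‖g‖
  have hsumB : ∑ i ∈ B, |g (e i)| ≤ φ B.card * ‖g‖ := by
    set ε : ℕ → ℝ := fun i => if 0 ≤ g (e i) then 1 else -1 with hε
    have hε1 : ∀ i ∈ B, |ε i| = 1 := by
      intro i _
      simp only [hε]
      split <;> simp
    have h1 : ∑ i ∈ B, |g (e i)| = g (∑ i ∈ B, ε i • e i) := by
      rw [map_sum]
      refine Finset.sum_congr rfl fun i _ => ?_
      rcases le_or_gt 0 (g (e i)) with h | h
      · simp [hε, h, abs_of_nonneg h]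
      · simp [hε, not_le.mpr h, abs_of_neg h]
    calc ∑ i ∈ B, |g (e i)| = g (∑ i ∈ B, ε i • e i) := h1
      _ ≤ ‖g‖ * ‖∑ i ∈ B, ε i • e i‖ := by
          refine le_trans (le_abs_self _) ?_
          rw [← Real.norm_eq_abs]
          exact g.le_opNorm _
      _ ≤ ‖g‖ * φ B.card := by
          exact mul_le_mul_of_nonneg_left (hφ B.card B ε le_rfl hε1) (norm_nonneg g)
      _ = φ B.card * ‖g‖ := mul_comm _ _
  set M : ℝ := t⁻¹ * φ B.card * ((B.card : ℝ))⁻¹ * ‖g‖ with hM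
  have hMnn : 0 ≤ M := by positivity
  -- coefficients off B are small
  have hc : ∀ i, i ∉ B → |g (e i)| ≤ M := by
    intro i hi
    have h1 : (B.card : ℝ) * (t * |g (e i)|) ≤ ∑ j ∈ B, |g (e j)| := by
      calc (B.card : ℝ) * (t * |g (e i)|) = ∑ _j ∈ B, t * |g (e i)| := by
            rw [Finset.sum_const, nsmul_eq_mul]
        _ ≤ ∑ j ∈ B, |g (e j)| := Finset.sum_le_sum fun j hj => hgreedy j hj i hi
    have h2 : (B.card : ℝ) * (t * |g (e i)|) ≤ φ B.card * ‖g‖ := h1.trans hsumB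
    have h3 : |g (e i)| = t⁻¹ * ((B.card : ℝ))⁻¹ * ((B.card : ℝ) * (t * |g (e i)|)) := by
      field_simp
    rw [h3, hM]
    calc t⁻¹ * ((B.card : ℝ))⁻¹ * ((B.card : ℝ) * (t * |g (e i)|))
        ≤ t⁻¹ * ((B.card : ℝ))⁻¹ * (φ B.card * ‖g‖) :=
          mul_le_mul_of_nonneg_left h2 (mul_nonneg (inv_nonneg.mpr ht0.le) (inv_nonneg.mpr hcard.le))
      _ = t⁻¹ * φ B.card * ((B.card : ℝ))⁻¹ * ‖g‖ := by ring
  -- compute the application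
  have happ : (g - ∑ i ∈ B, g (e i) • f i) (∑ i ∈ A, f i x • e i)
      = ∑ j ∈ A, f j x * (if j ∈ B then 0 else g (e j)) := by
    rw [map_sum]
    refine Finset.sum_congr rfl fun j hj => ?_
    simp only [ContinuousLinearMap.sub_apply, map_smul, smul_eq_mul,
      ContinuousLinearMap.coe_sum', Finset.sum_apply, ContinuousLinearMap.coe_smul',
      Pi.smul_apply, hbi, mul_ite, mul_one, mul_zero]
    rw [Finset.sum_ite_eq' B j (fun i => g (e i))]
    by_cases h : j ∈ B <;> simp [h] <;> ring
  -- sum of |f j x| over A bounded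
  have hsumA : ∑ j ∈ A, |f j x| ≤ φs A.card * ‖x‖ := by
    set ε : ℕ → ℝ := fun j => if 0 ≤ f j x then 1 else -1 with hε
    have hε1 : ∀ j ∈ A, |ε j| = 1 := by
      intro j _
      simp only [hε]
      split <;> simp
    have h1 : ∑ j ∈ A, |f j x| = (∑ j ∈ A, ε j • f j) x := by
      rw [ContinuousLinearMap.sum_apply]
      refine Finset.sum_congr rfl fun j _ => ?_
      rcases le_or_gt 0 (f j x) with h | h
      · simp [hε, h, abs_of_nonneg h]
      · simp [hε, not_le.mpr h, abs_of_neg h]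
    calc ∑ j ∈ A, |f j x| = (∑ j ∈ A, ε j • f j) x := h1
      _ ≤ ‖∑ j ∈ A, ε j • f j‖ * ‖x‖ := by
          refine le_trans (le_abs_self _) ?_
          rw [← Real.norm_eq_abs]
          exact (∑ j ∈ A, ε j • f j).le_opNorm _
      _ ≤ φs A.card * ‖x‖ :=
          mul_le_mul_of_nonneg_right (hφs A.card A ε le_rfl hε1) (norm_nonneg x)
  rw [happ]
  calc |∑ j ∈ A, f j x * (if j ∈ B then 0 else g (e j))|
      ≤ ∑ j ∈ A, |f j x * (if j ∈ B then 0 else g (e j))| := Finset.abs_sum_le_sum_abs _ _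
    _ ≤ ∑ j ∈ A, |f j x| * M := by
        refine Finset.sum_le_sum fun j _ => ?_
        rw [abs_mul]
        refine mul_le_mul_of_nonneg_left ?_ (abs_nonneg _)
        by_cases h : j ∈ B
        · simp [h, hMnn]
        · simpa [h] using hc j h
    _ = (∑ j ∈ A, |f j x|) * M := by rw [Finset.sum_mul]
    _ ≤ (φs A.card * ‖x‖) * M := mul_le_mul_of_nonneg_right hsumA hMnn
    _ = t⁻¹ * φs A.card * φ B.card * ((B.card : ℝ))⁻¹ * ‖x‖ * ‖g‖ := by rw [hM]; ring
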